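/- The subgroup W ≤ GL(F) generated by s_0, s_1, …, s_n has index 2 in the subgroup W^{B∨,RY} ≤ GL(F) generated by s_0, s_1, …, s_n and π^{B∨}: one has W^{B∨,RY} = W ∪ π^{B∨}·W (disjoint union), and π^{B∨} ∉ W. -/

import Mathlib

noncomputable section

namespace CvC

/-- Ambient space `F = ℝⁿ ⊕ ℝc`. -/
abbrev F (n : ℕ) := (Fin n → ℝ) × ℝ

/-- Bilinear form `⟨v + rc, w + sc⟩ = v ⬝ w`. -/
def bform (n : ℕ) (x y : F n) : ℝ := ∑ i, x.1 i * y.1 i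

/-- The constant function `c`. -/
def cvec (n : ℕ) : F n := (0, 1)

/-- `eps n i` is the basis vector `ε_i`, for `1 ≤ i ≤ n` (1-based; junk value `0` out of range). -/
def eps (n i : ℕ) : F n :=
  if h : 1 ≤ i ∧ i ≤ n then (Pi.single (⟨i - 1, by omega⟩ : Fin n) 1, 0) else 0

lemma bform_add_left (n : ℕ) (x y z : F n) :
    bform n (x + y) z = bform n x z + bform n y z := by
  simp [bform, add_mul, Finset.sum_add_distrib]

lemma bform_smul_left (n : ℕ) (c : ℝ) (x z : F n) :
    bform n (c • x) z = c * bform n x z := by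
  simp [bform, Finset.mul_sum, mul_assoc]

lemma bform_sub_left (n : ℕ) (x y z : F n) :
    bform n (x - y) z = bform n x z - bform n y z := by
  simp [bform, sub_mul, Finset.sum_sub_distrib]

/-- Reflection `s_f(g) = g − ⟨g, f^∨⟩ f`, `f^∨ = (2/⟨f,f⟩) f`, as a linear endomorphism. -/
def reflMap (n : ℕ) (f : F n) : Module.End ℝ (F n) where
  toFun g := g - ((2 / bform n f f) * bform n g f) • f
  map_add' x y := by
    rw [bform_add_left, mul_add, add_smul]; abel
  map_smul' c x := by
    simp only [RingHom.id_apply]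
    rw [bform_smul_left, smul_sub, smul_smul, mul_left_comm]

@[simp] lemma reflMap_apply (n : ℕ) (f g : F n) :
    reflMap n f g = g - ((2 / bform n f f) * bform n g f) • f := rfl

lemma reflMap_invol (n : ℕ) (f : F n) (hf : bform n f f ≠ 0) (g : F n) :
    reflMap n f (reflMap n f g) = g := by
  simp only [reflMap_apply]
  rw [bform_sub_left, bform_smul_left, sub_sub, ← add_smul]
  have key : (2 / bform n f f) * bform n g f +
      (2 / bform n f f) * (bform n g f - (2 / bform n f f) * bform n g f * bform n f f) = 0 := by
    field_simp
    ring
  rw [key, zero_smul, sub_zero]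

/-- Translation `t(v)(f) = f − ⟨f, v⟩c`, as a linear endomorphism. -/
def tMap (n : ℕ) (v : Fin n → ℝ) : Module.End ℝ (F n) where
  toFun g := g - bform n g (v, 0) • cvec n
  map_add' x y := by
    rw [bform_add_left, add_smul]; abel
  map_smul' c x := by
    simp only [RingHom.id_apply]
    rw [bform_smul_left, smul_sub, smul_smul]

@[simp] lemma tMap_apply (n : ℕ) (v : Fin n → ℝ) (g : F n) :
    tMap n v g = g - bform n g (v, 0) • cvec n := rfl

lemma bform_pair_add (n : ℕ) (g : F n) (v w : Fin n → ℝ) :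
    bform n g (v + w, 0) = bform n g (v, 0) + bform n g (w, 0) := by
  simp [bform, mul_add, Finset.sum_add_distrib]

lemma tMap_mul (n : ℕ) (v w : Fin n → ℝ) :
    tMap n v * tMap n w = tMap n (v + w) := by
  apply LinearMap.ext; intro g
  rw [Module.End.mul_apply]
  simp only [tMap_apply]
  rw [bform_sub_left, bform_smul_left]
  have hc : bform n (cvec n) (v, 0) = 0 := by simp [bform, cvec]
  rw [hc, mul_zero, sub_zero, bform_pair_add, add_smul]
  abel

lemma tMap_zero (n : ℕ) : tMap n 0 = 1 := by
  apply LinearMap.ext; intro g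
  rw [Module.End.one_apply, tMap_apply]
  have h0 : bform n g ((0 : Fin n → ℝ), 0) = 0 := by simp [bform]
  rw [h0, zero_smul, sub_zero]

/-- Translation `t(v)` as an invertible endomorphism. -/
def tU (n : ℕ) (v : Fin n → ℝ) : (Module.End ℝ (F n))ˣ where
  val := tMap n v
  inv := tMap n (-v)
  val_inv := by rw [tMap_mul, add_neg_cancel, tMap_zero]
  inv_val := by rw [tMap_mul, neg_add_cancel, tMap_zero]

/-- Reflection `s_f` as an invertible endomorphism (junk value `1` if `⟨f,f⟩ = 0`). -/
def reflE (n : ℕ) (f : F n) : (Module.End ℝ (F n))ˣ :=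
  if hf : bform n f f ≠ 0 then
    { val := reflMap n f
      inv := reflMap n f
      val_inv := by
        apply LinearMap.ext; intro g
        rw [Module.End.mul_apply, Module.End.one_apply]
        exact reflMap_invol n f hf g
      inv_val := by
        apply LinearMap.ext; intro g
        rw [Module.End.mul_apply, Module.End.one_apply]
        exact reflMap_invol n f hf g }
  else 1

/-- The simple affine roots `a_0, a_1, …, a_n` of type `(C_n^∨, C_n)`:
`a_0 = −2ε_1 + c`, `a_j = ε_j − ε_{j+1}` for `1 ≤ j ≤ n−1`, `a_n = 2ε_n`. -/
def aRootF (n k : ℕ) : F n :=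
  if k = 0 then (-(2:ℝ)) • eps n 1 + cvec n
  else if k = n then (2:ℝ) • eps n n
  else eps n k - eps n (k + 1)

/-- The generators `s_0, s_1, …, s_n` of the extended affine Weyl group of type
`(C_n^∨, C_n)`: `s_0 = t(ε_1) ∘ s_{2ε_1}` and `s_i = s_{a_i}` for `1 ≤ i ≤ n`. -/
def sgen (n k : ℕ) : (Module.End ℝ (F n))ˣ :=
  if k = 0 then tU n (eps n 1).1 * reflE n ((2:ℝ) • eps n 1)
  else reflE n (aRootF n k)

/-- The finite Weyl group `W_0 = ⟨s_1, …, s_n⟩` of type `C_n`. -/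
def W0grp (n : ℕ) : Subgroup (Module.End ℝ (F n))ˣ :=
  Subgroup.closure (sgen n '' Set.Icc 1 n)

/-- The extended affine Weyl group `W = ⟨s_0, s_1, …, s_n⟩` of type `(C_n^∨, C_n)`. -/
def Wgrp (n : ℕ) : Subgroup (Module.End ℝ (F n))ˣ :=
  Subgroup.closure (sgen n '' Set.Icc 0 n)

/-- Product of the generators `s_k` along a list of indices. -/
def du (n : ℕ) (l : List ℕ) : (Module.End ℝ (F n))ˣ := (l.map (sgen n)).prod

/-- The weight lattice `P_{C_n} = ℤε_1 ⊕ ⋯ ⊕ ℤε_n` (as a subset of `ℝⁿ`). -/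
def PC (n : ℕ) : Set (Fin n → ℝ) := { v | ∀ i, ∃ m : ℤ, v i = m }

/-- The weight lattice `P_{B_n} = P_{C_n} + ℤ·(1/2)(ε_1 + ⋯ + ε_n)` (as a subset of `ℝⁿ`). -/
def PB (n : ℕ) : Set (Fin n → ℝ) := { v | ∃ k : ℤ, ∀ i, ∃ m : ℤ, v i = m + (k : ℝ)/2 }

/-- `O_1 = {±ε_i + rc}`. -/
def O1 (n : ℕ) : Set (F n) :=
  { x | ∃ i, 1 ≤ i ∧ i ≤ n ∧ ∃ r : ℤ,
      x = eps n i + (r : ℝ) • cvec n ∨ x = -eps n i + (r : ℝ) • cvec n }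

/-- `O_2 = {±2ε_i + 2rc}`. -/
def O2 (n : ℕ) : Set (F n) :=
  { x | ∃ i, 1 ≤ i ∧ i ≤ n ∧ ∃ r : ℤ,
      x = (2:ℝ) • eps n i + ((2*r : ℤ) : ℝ) • cvec n ∨
      x = -((2:ℝ) • eps n i) + ((2*r : ℤ) : ℝ) • cvec n }

/-- `O_3 = {±ε_i + (r + 1/2)c}`. -/
def O3 (n : ℕ) : Set (F n) :=
  { x | ∃ i, 1 ≤ i ∧ i ≤ n ∧ ∃ r : ℤ,
      x = eps n i + ((r : ℝ) + 1/2) • cvec n ∨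
      x = -eps n i + ((r : ℝ) + 1/2) • cvec n }

/-- `O_4 = {±2ε_i + (2r+1)c}`. -/
def O4 (n : ℕ) : Set (F n) :=
  { x | ∃ i, 1 ≤ i ∧ i ≤ n ∧ ∃ r : ℤ,
      x = (2:ℝ) • eps n i + ((2*r+1 : ℤ) : ℝ) • cvec n ∨
      x = -((2:ℝ) • eps n i) + ((2*r+1 : ℤ) : ℝ) • cvec n }

/-- `O_5 = {±ε_i ± ε_j + rc, i < j}`. -/
def O5 (n : ℕ) : Set (F n) :=
  { x | ∃ i j, 1 ≤ i ∧ i < j ∧ j ≤ n ∧ ∃ r : ℤ,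
      x = eps n i + eps n j + (r : ℝ) • cvec n ∨
      x = eps n i - eps n j + (r : ℝ) • cvec n ∨
      x = -eps n i + eps n j + (r : ℝ) • cvec n ∨
      x = -eps n i - eps n j + (r : ℝ) • cvec n }

/-- The five `W`-orbits `O_1, …, O_5` of the affine root system of type `(C_n^∨, C_n)`. -/
def OO (n : ℕ) : Fin 5 → Set (F n) := ![O1 n, O2 n, O3 n, O4 n, O5 n]

/-- The affine root system `S` of type `(C_n^∨, C_n)`. -/
def Sset (n : ℕ) : Set (F n) := O1 n ∪ O2 n ∪ O3 n ∪ O4 n ∪ O5 n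

/-- The set `R̃₊ = {ε_i} ∪ {2ε_i} ∪ {ε_i ± ε_j : i < j}`. -/
def Rtplus (n : ℕ) : Set (F n) :=
  { x | (∃ i, 1 ≤ i ∧ i ≤ n ∧ (x = eps n i ∨ x = (2:ℝ) • eps n i)) ∨
        (∃ i j, 1 ≤ i ∧ i < j ∧ j ≤ n ∧ (x = eps n i + eps n j ∨ x = eps n i - eps n j)) }

/-- The set of positive affine roots `S⁺`. -/
def Splus (n : ℕ) : Set (F n) :=
  { x ∈ Sset n | 0 < x.2 } ∪ (Sset n ∩ Rtplus n)

lemma sum_single_mul (n : ℕ) (j : Fin n) (v : Fin n → ℝ) :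
    ∑ k, v k * (Pi.single j 1 : Fin n → ℝ) k = v j := by
  rw [Finset.sum_eq_single j]
  · simp
  · intro k _ hk
    simp [Pi.single_apply, hk]
  · intro h; exact absurd (Finset.mem_univ j) h

lemma bform_eps_right (n : ℕ) (x : F n) (i : ℕ) (h1 : 1 ≤ i) (h2 : i ≤ n) :
    bform n x (eps n i) = x.1 ⟨i - 1, by omega⟩ := by
  unfold bform eps
  rw [dif_pos ⟨h1, h2⟩]
  exact sum_single_mul n _ x.1

lemma bform_eps_eps (n i : ℕ) (h1 : 1 ≤ i) (h2 : i ≤ n) :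
    bform n (eps n i) (eps n i) = 1 := by
  rw [bform_eps_right n _ i h1 h2]
  unfold eps
  rw [dif_pos ⟨h1, h2⟩]
  simp

/-- `π^{C∨} = π^D`: the linear map with `ε_1 ↦ c − ε_1`, `ε_i ↦ ε_i` (`i ≥ 2`), `c ↦ c`. -/
def piCMap (n : ℕ) : Module.End ℝ (F n) where
  toFun g := g - bform n g (eps n 1) • ((2:ℝ) • eps n 1 - cvec n)
  map_add' x y := by
    rw [bform_add_left, add_smul]; abel
  map_smul' c x := by
    simp only [RingHom.id_apply]
    rw [bform_smul_left, smul_sub c, smul_smul]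

@[simp] lemma piCMap_apply (n : ℕ) (g : F n) :
    piCMap n g = g - bform n g (eps n 1) • ((2:ℝ) • eps n 1 - cvec n) := rfl

lemma piCMap_invol (n : ℕ) (g : F n) : piCMap n (piCMap n g) = g := by
  rcases Nat.eq_zero_or_pos n with h0 | hpos
  · subst h0
    have he : eps 0 1 = 0 := by simp [eps]
    simp [piCMap_apply, he, bform]
  · have hE := bform_eps_eps n 1 le_rfl hpos
    have hc : bform n (cvec n) (eps n 1) = 0 := by simp [bform, cvec]
    simp only [piCMap_apply]
    rw [bform_sub_left, bform_smul_left, bform_sub_left, bform_smul_left, hE, hc]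
    rw [sub_sub, ← add_smul]
    have key : bform n g (eps n 1) +
        (bform n g (eps n 1) - bform n g (eps n 1) * (2 * 1 - 0)) = 0 := by ring
    rw [key, zero_smul, sub_zero]

/-- `π^{C∨}` as an invertible endomorphism. -/
def piCU (n : ℕ) : (Module.End ℝ (F n))ˣ where
  val := piCMap n
  inv := piCMap n
  val_inv := by
    apply LinearMap.ext; intro g
    rw [Module.End.mul_apply, Module.End.one_apply]
    exact piCMap_invol n g
  inv_val := by
    apply LinearMap.ext; intro g
    rw [Module.End.mul_apply, Module.End.one_apply]
    exact piCMap_invol n g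

/-- `π^{B∨}`: the linear map with `ε_i ↦ (1/2)c − ε_{n−i+1}` and `c ↦ c`. -/
def piBMap (n : ℕ) : Module.End ℝ (F n) where
  toFun g := (fun i => -(g.1 (Fin.rev i)), g.2 + (1/2) * ∑ i, g.1 i)
  map_add' x y := by
    refine Prod.ext ?_ ?_
    · funext i; simp [neg_add]; ring
    · simp [Finset.sum_add_distrib]; ring
  map_smul' c x := by
    simp only [RingHom.id_apply]
    refine Prod.ext ?_ ?_
    · funext i; simp [mul_comm]
    · simp only [Prod.smul_snd, Prod.smul_fst, Pi.smul_apply, smul_eq_mul, Finset.mul_sum,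
        mul_add]
      congr 1
      exact Finset.sum_congr rfl fun i _ => by ring

@[simp] lemma piBMap_apply (n : ℕ) (g : F n) :
    piBMap n g = (fun i => -(g.1 (Fin.rev i)), g.2 + (1/2) * ∑ i, g.1 i) := rfl

lemma piBMap_invol (n : ℕ) (g : F n) : piBMap n (piBMap n g) = g := by
  simp only [piBMap_apply]
  refine Prod.ext ?_ ?_
  · funext i; simp
  · have h : ∑ i, -(g.1 (Fin.rev i)) = -∑ i, g.1 i := by
      rw [← Finset.sum_neg_distrib]
      exact Equiv.sum_comp (Equiv.mk Fin.rev Fin.rev Fin.rev_rev Fin.rev_rev) (fun i => -(g.1 i))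
    dsimp only
    rw [h]
    ring

/-- `π^{B∨}` as an invertible endomorphism. -/
def piBU (n : ℕ) : (Module.End ℝ (F n))ˣ where
  val := piBMap n
  inv := piBMap n
  val_inv := by
    apply LinearMap.ext; intro g
    rw [Module.End.mul_apply, Module.End.one_apply]
    exact piBMap_invol n g
  inv_val := by
    apply LinearMap.ext; intro g
    rw [Module.End.mul_apply, Module.End.one_apply]
    exact piBMap_invol n g

/-- The affine root `a_0^{C∨} = −(ε_1 + ε_2) + c` of Ram–Yip type `C_n^∨`. -/
def a0C (n : ℕ) : F n := -(eps n 1 + eps n 2) + cvec n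

/-- The reflection `s_0^{C∨} = s_{a_0^{C∨}}`. -/
def s0C (n : ℕ) : (Module.End ℝ (F n))ˣ := reflE n (a0C n)

/-- The extended affine Weyl group of Ram–Yip type `C_n^∨`:
`W^{C∨,RY} = ⟨s_0^{C∨}, s_1, …, s_n, π^{C∨}⟩`. -/
def WCRY (n : ℕ) : Subgroup (Module.End ℝ (F n))ˣ :=
  Subgroup.closure ({s0C n, piCU n} ∪ sgen n '' Set.Icc 1 n)

/-- The extended affine Weyl group of Ram–Yip type `B_n^∨`:
`W^{B∨,RY} = ⟨s_0, s_1, …, s_n, π^{B∨}⟩`. -/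
def WBRY (n : ℕ) : Subgroup (Module.End ℝ (F n))ˣ :=
  Subgroup.closure (insert (piBU n) (sgen n '' Set.Icc 0 n))

/-- The subgroup generated by `W_0` together with all the translations `t(μ)`, `μ ∈ P_{B_n}`. -/
def WBtrans (n : ℕ) : Subgroup (Module.End ℝ (F n))ˣ :=
  Subgroup.closure ((sgen n '' Set.Icc 1 n) ∪ (tU n '' PB n))

/-- The defining relators of the extended affine Weyl group of type `(C_n^∨, C_n)`
on the generators `σ_0, …, σ_n`. -/
def rels (n : ℕ) : Set (FreeGroup (Fin (n + 1))) :=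
  { r | (∃ i : Fin (n+1), r = FreeGroup.of i * FreeGroup.of i) ∨
        (∃ i j : Fin (n+1), ((i:ℕ) + 1 < (j:ℕ) ∨ (j:ℕ) + 1 < (i:ℕ)) ∧
          r = FreeGroup.of i * FreeGroup.of j * (FreeGroup.of i)⁻¹ * (FreeGroup.of j)⁻¹) ∨
        (∃ i j : Fin (n+1), 1 ≤ (i:ℕ) ∧ (i:ℕ) ≤ n - 2 ∧ (j:ℕ) = (i:ℕ) + 1 ∧
          r = FreeGroup.of i * FreeGroup.of j * FreeGroup.of i *
              ((FreeGroup.of j)⁻¹ * (FreeGroup.of i)⁻¹ * (FreeGroup.of j)⁻¹)) ∨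
        (∃ i j : Fin (n+1), ((i:ℕ) = 0 ∨ (i:ℕ) = n - 1) ∧ (j:ℕ) = (i:ℕ) + 1 ∧
          r = FreeGroup.of i * FreeGroup.of j * FreeGroup.of i * FreeGroup.of j *
              ((FreeGroup.of i)⁻¹ * (FreeGroup.of j)⁻¹ * (FreeGroup.of i)⁻¹ *
                (FreeGroup.of j)⁻¹)) }


/-! ### Auxiliary lemmas for Statement 13 -/

lemma bform_comm (n : ℕ) (x y : F n) : bform n x y = bform n y x := by
  simp [bform, mul_comm]

lemma bform_add_right (n : ℕ) (x y z : F n) :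
    bform n x (y + z) = bform n x y + bform n x z := by
  rw [bform_comm, bform_add_left, bform_comm n y, bform_comm n z]

lemma bform_sub_right (n : ℕ) (x y z : F n) :
    bform n x (y - z) = bform n x y - bform n x z := by
  rw [bform_comm, bform_sub_left, bform_comm n y, bform_comm n z]

lemma bform_smul_right (n : ℕ) (c : ℝ) (x z : F n) :
    bform n x (c • z) = c * bform n x z := by
  rw [bform_comm, bform_smul_left, bform_comm]

lemma bform_cvec_right (n : ℕ) (x : F n) : bform n x (cvec n) = 0 := by
  simp [bform, cvec]

lemma bform_cvec_left (n : ℕ) (x : F n) : bform n (cvec n) x = 0 := by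
  simp [bform, cvec]

lemma bform_eps_ne (n i j : ℕ) (h1 : 1 ≤ i) (h2 : i ≤ n) (h3 : 1 ≤ j) (h4 : j ≤ n)
    (hij : i ≠ j) : bform n (eps n i) (eps n j) = 0 := by
  rw [bform_eps_right n _ j h3 h4]
  unfold eps
  rw [dif_pos ⟨h1, h2⟩]
  simp only [Pi.single_apply, Fin.mk.injEq]
  rw [if_neg (by omega)]

lemma norm_a0 (n : ℕ) (hn : 1 ≤ n) : bform n (aRootF n 0) (aRootF n 0) = 4 := by
  rw [aRootF, if_pos rfl]
  rw [bform_add_left, bform_add_right, bform_add_right, bform_cvec_left, bform_cvec_right,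
    bform_cvec_right, bform_smul_left, bform_smul_right, bform_eps_eps n 1 le_rfl hn]
  norm_num

lemma norm_an (n : ℕ) (hn : 1 ≤ n) : bform n (aRootF n n) (aRootF n n) = 4 := by
  rw [aRootF, if_neg (by omega), if_pos rfl]
  rw [bform_smul_left, bform_smul_right, bform_eps_eps n n hn le_rfl]
  norm_num

lemma norm_mid (n j : ℕ) (h1 : 1 ≤ j) (h2 : j < n) :
    bform n (aRootF n j) (aRootF n j) = 2 := by
  rw [aRootF, if_neg (by omega), if_neg (by omega)]
  rw [bform_sub_left, bform_sub_right, bform_sub_right,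
    bform_eps_eps n j h1 (by omega), bform_eps_eps n (j+1) (by omega) (by omega),
    bform_eps_ne n j (j+1) h1 (by omega) (by omega) (by omega) (by omega),
    bform_eps_ne n (j+1) j (by omega) (by omega) h1 (by omega) (by omega)]
  norm_num

lemma piB_cvec (n : ℕ) : piBMap n (cvec n) = cvec n := by
  refine Prod.ext ?_ ?_
  · funext i; simp [cvec]
  · simp [cvec]

lemma piB_eps (n i : ℕ) (h1 : 1 ≤ i) (h2 : i ≤ n) :
    piBMap n (eps n i) = -(eps n (n - i + 1)) + (1/2 : ℝ) • cvec n := by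
  have hr : 1 ≤ n - i + 1 ∧ n - i + 1 ≤ n := ⟨by omega, by omega⟩
  refine Prod.ext ?_ ?_
  · funext j
    show -((eps n i).1 (Fin.rev j)) = (-(eps n (n - i + 1)) + (1/2 : ℝ) • cvec n).1 j
    rw [eps, dif_pos ⟨h1, h2⟩, eps, dif_pos hr]
    simp only [cvec, Prod.fst_add, Prod.fst_neg, Prod.smul_fst, Pi.add_apply, Pi.neg_apply,
      Pi.smul_apply, smul_zero, Pi.zero_apply, add_zero, Pi.single_apply, Fin.ext_iff,
      Fin.val_rev]
    have hj := j.isLt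
    by_cases hc : (j : ℕ) = n - i
    · rw [if_pos (by omega), if_pos (by omega)]
    · rw [if_neg (by omega), if_neg (by omega)]
  · show (eps n i).2 + (1/2) * ∑ k, (eps n i).1 k = (-(eps n (n - i + 1)) + (1/2 : ℝ) • cvec n).2
    rw [eps, dif_pos ⟨h1, h2⟩, eps, dif_pos hr]
    simp [cvec, Finset.sum_pi_single]

lemma bform_piB (n : ℕ) (x y : F n) :
    bform n (piBMap n x) (piBMap n y) = bform n x y := by
  simp only [bform]
  have h : ∀ i : Fin n, (piBMap n x).1 i * (piBMap n y).1 i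
      = x.1 (Fin.rev i) * y.1 (Fin.rev i) := by
    intro i; simp [piBMap_apply]
  rw [Finset.sum_congr rfl (fun i _ => h i)]
  exact Equiv.sum_comp (Equiv.mk Fin.rev Fin.rev Fin.rev_rev Fin.rev_rev)
    (fun i => x.1 i * y.1 i)

lemma piB_a0 (n : ℕ) (hn : 1 ≤ n) : piBMap n (aRootF n 0) = aRootF n n := by
  rw [aRootF, if_pos rfl, aRootF, if_neg (by omega), if_pos rfl]
  rw [map_add, map_smul, piB_cvec, piB_eps n 1 le_rfl hn]
  have h : n - 1 + 1 = n := by omega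
  rw [h]
  module

lemma piB_an (n : ℕ) (hn : 1 ≤ n) : piBMap n (aRootF n n) = aRootF n 0 := by
  rw [aRootF, if_neg (by omega), if_pos rfl, aRootF, if_pos rfl]
  rw [map_smul, piB_eps n n hn le_rfl]
  have h : n - n + 1 = 1 := by omega
  rw [h]
  module

lemma piB_mid (n j : ℕ) (h1 : 1 ≤ j) (h2 : j < n) :
    piBMap n (aRootF n j) = aRootF n (n - j) := by
  rw [aRootF, if_neg (by omega), if_neg (by omega),
    aRootF, if_neg (by omega), if_neg (by omega)]
  rw [map_sub, piB_eps n j h1 (by omega), piB_eps n (j+1) (by omega) (by omega)]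
  have e1 : n - (j+1) + 1 = n - j := by omega
  have e2 : n - j + 1 = n - j + 1 := rfl
  rw [e1]
  module

lemma piBU_inv (n : ℕ) : (piBU n)⁻¹ = piBU n := Units.ext rfl

lemma piBU_sq (n : ℕ) : piBU n * piBU n = 1 := by
  apply Units.ext
  apply LinearMap.ext; intro g
  show piBMap n (piBMap n g) = g
  exact piBMap_invol n g

lemma reflE_inv (n : ℕ) (f : F n) : (reflE n f)⁻¹ = reflE n f := by
  unfold reflE
  split
  · exact Units.ext rfl
  · exact inv_one

lemma piB_conj_reflE (n : ℕ) (f : F n) (hf : bform n f f ≠ 0) :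
    piBU n * reflE n f * piBU n = reflE n (piBMap n f) := by
  have hf2 : bform n (piBMap n f) (piBMap n f) ≠ 0 := by rw [bform_piB]; exact hf
  apply Units.ext
  rw [Units.val_mul, Units.val_mul]
  show (piBMap n) * (reflE n f).val * (piBMap n) = ((reflE n (piBMap n f)) : Module.End ℝ (F n))
  rw [reflE, dif_pos hf, reflE, dif_pos hf2]
  apply LinearMap.ext; intro g
  show piBMap n (reflMap n f (piBMap n g)) = reflMap n (piBMap n f) g
  rw [reflMap_apply, reflMap_apply, map_sub, map_smul, piBMap_invol]
  have hb : bform n (piBMap n g) f = bform n g (piBMap n f) := by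
    conv_lhs => rw [← piBMap_invol n f]
    exact bform_piB n g (piBMap n f)
  have hn2 : bform n f f = bform n (piBMap n f) (piBMap n f) := (bform_piB n f f).symm
  rw [hb, hn2]

lemma eps_pair (n : ℕ) (hn : 1 ≤ n) : ((eps n 1).1, (0:ℝ)) = eps n 1 := by
  rw [eps, dif_pos ⟨le_rfl, hn⟩]

lemma sgen0_eq (n : ℕ) (hn : 1 ≤ n) : sgen n 0 = reflE n (aRootF n 0) := by
  have h4 : bform n ((2:ℝ) • eps n 1) ((2:ℝ) • eps n 1) = 4 := by
    rw [bform_smul_left, bform_smul_right, bform_eps_eps n 1 le_rfl hn]; norm_num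
  have h0 := norm_a0 n hn
  apply Units.ext
  rw [sgen, if_pos rfl, Units.val_mul]
  show (tMap n (eps n 1).1) * ((reflE n ((2:ℝ) • eps n 1)) : Module.End ℝ (F n))
      = ((reflE n (aRootF n 0)) : Module.End ℝ (F n))
  rw [reflE, dif_pos (by rw [h4]; norm_num), reflE, dif_pos (by rw [h0]; norm_num)]
  apply LinearMap.ext; intro g
  show tMap n (eps n 1).1 (reflMap n ((2:ℝ) • eps n 1) g) = reflMap n (aRootF n 0) g
  rw [tMap_apply, reflMap_apply, reflMap_apply, h4, h0, eps_pair n hn]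
  rw [bform_sub_left, bform_smul_left, bform_smul_left, bform_eps_eps n 1 le_rfl hn]
  rw [aRootF, if_pos rfl, bform_add_right, bform_cvec_right, bform_smul_right,
    bform_smul_right]
  module

/-- The lattice `ℤⁿ × ℤ ⊂ F`. -/
def Lat (n : ℕ) : Set (F n) :=
  {x | (∀ i, ∃ m : ℤ, x.1 i = m) ∧ ∃ m : ℤ, x.2 = m}

lemma lat_sub_smul (n : ℕ) {x f : F n} (hx : x ∈ Lat n) (hf : f ∈ Lat n)
    {d : ℝ} (hd : ∃ m : ℤ, d = m) : x - d • f ∈ Lat n := by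
  obtain ⟨m, rfl⟩ := hd
  constructor
  · intro i
    obtain ⟨a, ha⟩ := hx.1 i; obtain ⟨b, hb⟩ := hf.1 i
    refine ⟨a - m * b, ?_⟩
    show x.1 i - (m : ℝ) * f.1 i = ((a - m * b : ℤ) : ℝ)
    rw [ha, hb]; push_cast; ring
  · obtain ⟨a, ha⟩ := hx.2; obtain ⟨b, hb⟩ := hf.2
    refine ⟨a - m * b, ?_⟩
    show x.2 - (m : ℝ) * f.2 = ((a - m * b : ℤ) : ℝ)
    rw [ha, hb]; push_cast; ring

lemma eps_lat (n i : ℕ) : eps n i ∈ Lat n := by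
  unfold eps
  split
  · constructor
    · intro j
      rename_i h
      by_cases hj : j = ⟨i - 1, by omega⟩
      · exact ⟨1, by subst hj; simp⟩
      · exact ⟨0, by simp [Pi.single_apply, hj]⟩
    · exact ⟨0, by norm_num⟩
  · exact ⟨fun j => ⟨0, by norm_num⟩, ⟨0, by norm_num⟩⟩

lemma cvec_lat (n : ℕ) : cvec n ∈ Lat n :=
  ⟨fun j => ⟨0, by simp [cvec]⟩, ⟨1, by simp [cvec]⟩⟩

lemma lat_zero (n : ℕ) : (0 : F n) ∈ Lat n :=
  ⟨fun j => ⟨0, by norm_num⟩, ⟨0, by norm_num⟩⟩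

lemma aRoot_lat (n k : ℕ) : aRootF n k ∈ Lat n := by
  rw [aRootF]
  split
  · -- -2•eps + cvec = cvec - 2 • eps
    have h : (-(2:ℝ)) • eps n 1 + cvec n = cvec n - (((2:ℤ)):ℝ) • eps n 1 := by
      push_cast; module
    rw [h]
    exact lat_sub_smul n (cvec_lat n) (eps_lat n 1) ⟨2, rfl⟩
  split
  · have h : (2:ℝ) • eps n n = (0 : F n) - ((-2:ℤ):ℝ) • eps n n := by push_cast; module
    rw [h]
    exact lat_sub_smul n (lat_zero n) (eps_lat n n) ⟨-2, rfl⟩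
  · have h : eps n k - eps n (k+1) = eps n k - ((1:ℤ):ℝ) • eps n (k+1) := by
      push_cast; module
    rw [h]
    exact lat_sub_smul n (eps_lat n k) (eps_lat n (k+1)) ⟨1, rfl⟩

lemma bform_lat_eps (n : ℕ) {x : F n} (hx : x ∈ Lat n) (i : ℕ) (h1 : 1 ≤ i) (h2 : i ≤ n) :
    ∃ m : ℤ, bform n x (eps n i) = m := by
  rw [bform_eps_right n x i h1 h2]
  exact hx.1 _

lemma sgen_lat (n : ℕ) (hn : 1 ≤ n) (k : ℕ) (hk : k ≤ n) {x : F n} (hx : x ∈ Lat n) :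
    ((sgen n k : Module.End ℝ (F n))) x ∈ Lat n := by
  rcases Nat.eq_zero_or_pos k with rfl | hk1
  · -- k = 0
    rw [sgen0_eq n hn]
    rw [reflE, dif_pos (by rw [norm_a0 n hn]; norm_num)]
    show reflMap n (aRootF n 0) x ∈ Lat n
    rw [reflMap_apply, norm_a0 n hn]
    refine lat_sub_smul n hx (aRoot_lat n 0) ?_
    obtain ⟨m, hm⟩ := bform_lat_eps n hx 1 le_rfl hn
    refine ⟨-m, ?_⟩
    rw [aRootF, if_pos rfl, bform_add_right, bform_cvec_right, bform_smul_right, hm]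
    push_cast; ring
  rcases eq_or_lt_of_le hk with heq | hklt
  · -- k = n
    subst heq
    rw [sgen, if_neg (by omega), reflE, dif_pos (by rw [norm_an k hn]; norm_num)]
    show reflMap k (aRootF k k) x ∈ Lat k
    rw [reflMap_apply, norm_an k hn]
    refine lat_sub_smul k hx (aRoot_lat k k) ?_
    obtain ⟨m, hm⟩ := bform_lat_eps k hx k hk1 le_rfl
    refine ⟨m, ?_⟩
    rw [aRootF, if_neg (by omega), if_pos rfl, bform_smul_right, hm]
    ring
  · -- 1 ≤ k < n
    rw [sgen, if_neg (by omega), reflE, dif_pos (by rw [norm_mid n k hk1 hklt]; norm_num)]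
    show reflMap n (aRootF n k) x ∈ Lat n
    rw [reflMap_apply, norm_mid n k hk1 hklt]
    refine lat_sub_smul n hx (aRoot_lat n k) ?_
    obtain ⟨m1, hm1⟩ := bform_lat_eps n hx k hk1 (by omega)
    obtain ⟨m2, hm2⟩ := bform_lat_eps n hx (k+1) (by omega) (by omega)
    refine ⟨m1 - m2, ?_⟩
    rw [aRootF, if_neg (by omega), if_neg (by omega), bform_sub_right, hm1, hm2]
    push_cast; ring

lemma sgen_inv (n : ℕ) (hn : 1 ≤ n) (k : ℕ) : (sgen n k)⁻¹ = sgen n k := by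
  rcases Nat.eq_zero_or_pos k with rfl | hk1
  · rw [sgen0_eq n hn, reflE_inv]
  · rw [sgen, if_neg (by omega), reflE_inv]

/-- The stabilizer of the lattice. -/
def Hgrp (n : ℕ) : Subgroup (Module.End ℝ (F n))ˣ where
  carrier := {g | ∀ x ∈ Lat n, ((g : Module.End ℝ (F n))) x ∈ Lat n ∧
    ((g⁻¹ : (Module.End ℝ (F n))ˣ) : Module.End ℝ (F n)) x ∈ Lat n}
  one_mem' := by
    intro x hx
    refine ⟨?_, ?_⟩ <;> simpa using hx
  mul_mem' := by
    intro a b ha hb x hx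
    constructor
    · have h := (ha _ (hb x hx).1).1
      rw [Units.val_mul, Module.End.mul_apply]
      exact h
    · rw [mul_inv_rev, Units.val_mul, Module.End.mul_apply]
      exact (hb _ (ha x hx).2).2
  inv_mem' := by
    intro a ha x hx
    refine ⟨(ha x hx).2, ?_⟩
    rw [inv_inv]
    exact (ha x hx).1

lemma Wgrp_le_Hgrp (n : ℕ) (hn : 1 ≤ n) : Wgrp n ≤ Hgrp n := by
  rw [Wgrp, Subgroup.closure_le]
  rintro s ⟨k, ⟨_, hk2⟩, rfl⟩
  intro x hx
  refine ⟨sgen_lat n hn k hk2 hx, ?_⟩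
  rw [sgen_inv n hn k]
  exact sgen_lat n hn k hk2 hx

lemma piBU_not_W (n : ℕ) (hn : 1 ≤ n) : piBU n ∉ Wgrp n := by
  intro h
  have hmem := (Wgrp_le_Hgrp n hn h) (eps n 1) (eps_lat n 1)
  have h2 : ((piBU n : Module.End ℝ (F n)) (eps n 1)).2 = 1/2 := by
    show (piBMap n (eps n 1)).2 = 1/2
    rw [piB_eps n 1 le_rfl hn]
    have : (eps n (n - 1 + 1)).2 = 0 := by
      rw [eps, dif_pos ⟨by omega, by omega⟩]
    simp [cvec, this]
  obtain ⟨m, hm⟩ := hmem.1.2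
  rw [h2] at hm
  have : (1 : ℝ) = 2 * m := by linarith
  have : (1 : ℤ) = 2 * m := by exact_mod_cast this
  omega

lemma conj_sgen (n : ℕ) (hn : 2 ≤ n) (k : ℕ) (hk : k ≤ n) :
    piBU n * sgen n k * piBU n ∈ Wgrp n := by
  have hn1 : 1 ≤ n := by omega
  have hgen : ∀ j, j ≤ n → sgen n j ∈ Wgrp n := fun j hj =>
    Subgroup.subset_closure ⟨j, ⟨Nat.zero_le _, hj⟩, rfl⟩
  rcases Nat.eq_zero_or_pos k with rfl | hk1
  · rw [sgen0_eq n hn1, piB_conj_reflE n _ (by rw [norm_a0 n hn1]; norm_num), piB_a0 n hn1]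
    have : reflE n (aRootF n n) = sgen n n := by rw [sgen, if_neg (by omega)]
    rw [this]
    exact hgen n le_rfl
  rcases eq_or_lt_of_le hk with heq | hklt
  · subst heq
    rw [sgen, if_neg (by omega), piB_conj_reflE k _ (by rw [norm_an k hn1]; norm_num),
      piB_an k hn1, ← sgen0_eq k hn1]
    exact hgen 0 (by omega)
  · rw [sgen, if_neg (by omega),
      piB_conj_reflE n _ (by rw [norm_mid n k hk1 hklt]; norm_num), piB_mid n k hk1 hklt]
    have : reflE n (aRootF n (n - k)) = sgen n (n - k) := by rw [sgen, if_neg (by omega)]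
    rw [this]
    exact hgen (n - k) (by omega)

lemma conj_mem_W (n : ℕ) (hn : 2 ≤ n) {w : (Module.End ℝ (F n))ˣ} (hw : w ∈ Wgrp n) :
    piBU n * w * piBU n ∈ Wgrp n := by
  induction hw using Subgroup.closure_induction with
  | mem s hs =>
    obtain ⟨k, ⟨_, hk⟩, rfl⟩ := hs
    exact conj_sgen n hn k hk
  | one =>
    rw [mul_one, piBU_sq]
    exact one_mem _
  | mul a b _ _ ha hb =>
    have key : piBU n * (a * b) * piBU n
        = (piBU n * a * piBU n) * (piBU n * b * piBU n) := by
      have h2 := piBU_sq n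
      calc piBU n * (a * b) * piBU n
          = piBU n * a * (piBU n * piBU n) * b * piBU n := by rw [h2]; group
        _ = (piBU n * a * piBU n) * (piBU n * b * piBU n) := by group
    rw [key]
    exact mul_mem ha hb
  | inv a _ ha =>
    have key : piBU n * a⁻¹ * piBU n = (piBU n * a * piBU n)⁻¹ := by
      rw [mul_inv_rev, mul_inv_rev, piBU_inv]
      group
    rw [key]
    exact inv_mem ha

lemma W_le_WBRY (n : ℕ) : Wgrp n ≤ WBRY n :=
  Subgroup.closure_mono (Set.subset_insert _ _)

lemma piBU_mem_WBRY (n : ℕ) : piBU n ∈ WBRY n :=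
  Subgroup.subset_closure (Set.mem_insert _ _)

/-- `W` has index 2 in `W^{B∨,RY}`:
`W^{B∨,RY} = W ⊔ π^{B∨}·W` and `π^{B∨} ∉ W`. -/
theorem W_index_two_in_WBRY (n : ℕ) (hn : 2 ≤ n) :
    ((WBRY n : Set (Module.End ℝ (F n))ˣ)
        = (Wgrp n : Set (Module.End ℝ (F n))ˣ)
          ∪ (fun w => piBU n * w) '' (Wgrp n : Set (Module.End ℝ (F n))ˣ)) ∧
    Disjoint ((Wgrp n : Set (Module.End ℝ (F n))ˣ))
      ((fun w => piBU n * w) '' (Wgrp n : Set (Module.End ℝ (F n))ˣ)) ∧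
    piBU n ∉ Wgrp n := by
  have hn1 : 1 ≤ n := by omega
  have hnotW := piBU_not_W n hn1
  refine ⟨?_, ?_, hnotW⟩
  · apply Set.Subset.antisymm
    · intro x hx
      have hx' : x ∈ WBRY n := hx
      rw [WBRY] at hx'
      clear hx
      induction hx' using Subgroup.closure_induction with
      | mem s hs =>
        rcases hs with rfl | ⟨k, ⟨_, hk⟩, rfl⟩
        · exact Or.inr ⟨1, one_mem _, by simp⟩
        · exact Or.inl (Subgroup.subset_closure ⟨k, ⟨Nat.zero_le _, hk⟩, rfl⟩)
      | one => exact Or.inl (one_mem _)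
      | mul a b _ _ ha hb =>
        rcases ha with ha | ⟨a', ha', rfl⟩
        · rcases hb with hb | ⟨b', hb', rfl⟩
          · exact Or.inl (mul_mem ha hb)
          · refine Or.inr ⟨(piBU n * a * piBU n) * b', mul_mem (conj_mem_W n hn ha) hb', ?_⟩
            show piBU n * (piBU n * a * piBU n * b') = a * (piBU n * b')
            have h2 := piBU_sq n
            calc piBU n * (piBU n * a * piBU n * b')
                = (piBU n * piBU n) * a * (piBU n * b') := by group
              _ = a * (piBU n * b') := by rw [h2]; group
        · rcases hb with hb | ⟨b', hb', rfl⟩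
          · exact Or.inr ⟨a' * b, mul_mem ha' hb, by show _ = _; group⟩
          · refine Or.inl ?_
            have key : (piBU n * a') * (piBU n * b') = (piBU n * a' * piBU n) * b' := by
              group
            rw [key]
            exact mul_mem (conj_mem_W n hn ha') hb'
      | inv a _ ha =>
        rcases ha with ha | ⟨a', ha', rfl⟩
        · exact Or.inl (inv_mem ha)
        · refine Or.inr ⟨piBU n * a'⁻¹ * piBU n, conj_mem_W n hn (inv_mem ha'), ?_⟩
          show piBU n * (piBU n * a'⁻¹ * piBU n) = (piBU n * a')⁻¹
          have h2 := piBU_sq n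
          rw [mul_inv_rev, piBU_inv]
          calc piBU n * (piBU n * a'⁻¹ * piBU n)
              = (piBU n * piBU n) * a'⁻¹ * piBU n := by group
            _ = a'⁻¹ * piBU n := by rw [h2]; group
    · rintro x (hx | ⟨w, hw, rfl⟩)
      · exact W_le_WBRY n hx
      · exact mul_mem (piBU_mem_WBRY n) (W_le_WBRY n hw)
  · rw [Set.disjoint_left]
    rintro x hx ⟨w, hw, rfl⟩
    apply hnotW
    have : piBU n = (piBU n * w) * w⁻¹ := by group
    rw [this]
    exact mul_mem hx (inv_mem hw)

end CvC
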